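/- Assume N > 1 and there exists θ⁰ such that for every x ∈ Ω, h_{θ⁰_{G(x)}}(x) < h_{θ⁰_j}(x) for all j ≠ G(x) (strict perfect separation). Then for any fixed ε > 0, sup_θ Φ^G_ε(θ) = 0, and the supremum is not attained: Φ^G_ε(θ) < 0 for every θ ∈ ℝ^{K×N}. -/

import Mathlib

open Matrix Real Filter

/-- Softmax (smeared-out) assignment probabilities for a linear PMD. -/
noncomputable def softp {Ω : Type*} [Fintype Ω] {K N : ℕ}
    (η : Ω → Fin K → ℝ) (ε : ℝ) (θ : Fin N → Fin K → ℝ) (i : Fin N) (x : Ω) : ℝ :=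
  Real.exp (-(θ i ⬝ᵥ η x) / ε) / ∑ j, Real.exp (-(θ j ⬝ᵥ η x) / ε)

/-- The multinomial logistic objective Φ^G_ε. -/
noncomputable def Phi {Ω : Type*} [Fintype Ω] {K N : ℕ}
    (η : Ω → Fin K → ℝ) (G : Ω → Fin N) (ε : ℝ) (θ : Fin N → Fin K → ℝ) : ℝ :=
  (1 / (Fintype.card Ω : ℝ)) * ∑ x, Real.log (softp η ε θ (G x) x)

lemma softp_pos {Ω : Type*} [Fintype Ω] {K N : ℕ}
    (η : Ω → Fin K → ℝ) (ε : ℝ) (θ : Fin N → Fin K → ℝ) (i : Fin N) (x : Ω)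
    [NeZero N] : 0 < softp η ε θ i x := by
  apply div_pos (Real.exp_pos _)
  exact Finset.sum_pos (fun j _ => Real.exp_pos _) ⟨i, Finset.mem_univ i⟩

lemma softp_lt_one {Ω : Type*} [Fintype Ω] {K N : ℕ} (hN : 1 < N)
    (η : Ω → Fin K → ℝ) (ε : ℝ) (θ : Fin N → Fin K → ℝ) (i : Fin N) (x : Ω) :
    softp η ε θ i x < 1 := by
  haveI : Nontrivial (Fin N) := Fin.nontrivial_iff_two_le.mpr hN
  obtain ⟨j, hj⟩ := exists_ne i
  rw [softp, div_lt_one (Finset.sum_pos (fun j _ => Real.exp_pos _) ⟨i, Finset.mem_univ i⟩)]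
  exact Finset.single_lt_sum (f := fun j => Real.exp (-(θ j ⬝ᵥ η x) / ε)) hj (Finset.mem_univ i) (Finset.mem_univ j)
    (Real.exp_pos _) (fun k _ _ => (Real.exp_pos _).le)

theorem sup_not_attained {Ω : Type*} [Fintype Ω] [Nonempty Ω] {K N : ℕ} (hN : 1 < N)
    (η : Ω → Fin K → ℝ) (G : Ω → Fin N) (ε : ℝ) (hε : 0 < ε)
    (θ0 : Fin N → Fin K → ℝ)
    (hsep : ∀ x : Ω, ∀ j : Fin N, j ≠ G x → θ0 (G x) ⬝ᵥ η x < θ0 j ⬝ᵥ η x) :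
    (⨆ θ : Fin N → Fin K → ℝ, Phi η G ε θ) = 0 ∧
      ∀ θ : Fin N → Fin K → ℝ, Phi η G ε θ < 0 := by
  haveI : NeZero N := ⟨by omega⟩
  have hneg : ∀ θ : Fin N → Fin K → ℝ, Phi η G ε θ < 0 := by
    intro θ
    have hcard : (0:ℝ) < (Fintype.card Ω : ℝ) := by
      exact_mod_cast Fintype.card_pos
    apply mul_neg_of_pos_of_neg (by positivity)
    apply Finset.sum_neg (fun x _ => ?_) Finset.univ_nonempty
    exact Real.log_neg (softp_pos η ε θ (G x) x) (softp_lt_one hN η ε θ (G x) x)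
  refine ⟨?_, hneg⟩
  have hbdd : BddAbove (Set.range fun θ : Fin N → Fin K → ℝ => Phi η G ε θ) :=
    ⟨0, by rintro y ⟨θ, rfl⟩; exact (hneg θ).le⟩
  -- limit along t • θ0
  have hlim : Tendsto (fun t : ℝ => Phi η G ε (fun i k => t * θ0 i k)) atTop (nhds 0) := by
    have hx : ∀ x : Ω, Tendsto
        (fun t : ℝ => Real.log (softp η ε (fun i k => t * θ0 i k) (G x) x)) atTop (nhds 0) := by
      intro x
      set a : Fin N → ℝ := fun j => θ0 j ⬝ᵥ η x with ha
      have key : ∀ t : ℝ, softp η ε (fun i k => t * θ0 i k) (G x) x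
          = (∑ j, Real.exp (t * (a (G x) - a j) / ε))⁻¹ := by
        intro t
        have hdot : ∀ j : Fin N, (fun k => t * θ0 j k) ⬝ᵥ η x = t * a j := by
          intro j
          simp [dotProduct, ha, Finset.mul_sum, mul_assoc]
        have hterm : ∀ j : Fin N, Real.exp (t * (a (G x) - a j) / ε)
            = Real.exp (-(t * a j) / ε) / Real.exp (-(t * a (G x)) / ε) := by
          intro j
          rw [← Real.exp_sub]
          congr 1
          ring
        rw [softp]
        simp only [hdot]
        rw [Finset.sum_congr rfl (fun j _ => hterm j), ← Finset.sum_div, inv_div]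
      have hsum : Tendsto (fun t : ℝ => ∑ j, Real.exp (t * (a (G x) - a j) / ε)) atTop
          (nhds 1) := by
        have : (1:ℝ) = ∑ j : Fin N, (if j = G x then (1:ℝ) else 0) := by
          simp
        rw [this]
        apply tendsto_finset_sum
        intro j _
        by_cases hj : j = G x
        · subst hj
          simp only [if_pos rfl, sub_self, zero_mul, mul_zero, zero_div, Real.exp_zero]
          exact tendsto_const_nhds
        · simp only [if_neg hj]
          have hc : (a (G x) - a j) / ε < 0 :=
            div_neg_of_neg_of_pos (sub_neg.mpr (hsep x j hj)) hε
          have : Tendsto (fun t : ℝ => t * ((a (G x) - a j) / ε)) atTop atBot :=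
            tendsto_id.atTop_mul_const_of_neg hc
          have := Real.tendsto_exp_atBot.comp this
          refine this.congr fun t => ?_
          simp only [Function.comp]
          congr 1
          ring
      have hsoftp : Tendsto (fun t : ℝ => softp η ε (fun i k => t * θ0 i k) (G x) x)
          atTop (nhds 1) := by
        simp only [key]
        have := hsum.inv₀ one_ne_zero
        simpa using this
      have := (Real.continuousAt_log one_ne_zero).tendsto.comp hsoftp
      rw [Real.log_one] at this; exact this
    have : Tendsto (fun t : ℝ => ∑ x, Real.log (softp η ε (fun i k => t * θ0 i k) (G x) x))
        atTop (nhds 0) := by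
      have := tendsto_finset_sum Finset.univ (fun x _ => hx x)
      simpa using this
    have := this.const_mul (1 / (Fintype.card Ω : ℝ))
    simpa [Phi] using this
  apply le_antisymm
  · exact ciSup_le fun θ => (hneg θ).le
  · exact le_of_tendsto' hlim fun t => le_ciSup hbdd _
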